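/- Utility guarantee for random sampling followed by near-optimal selection: let W be a finite set, let (M, D) be a metric space with attribute map w ↦ o_w from W to M, and let f be a non-negative, monotone, submodular set function on subsets of W with smoothness parameter λ ≥ 0. Let B ≥ 1 be a natural number, let r ∈ (0,1), let ε ∈ (0,1), and let α ≥ 0. Let S_OPT ⊆ W with |S_OPT| ≤ B maximize f over all subsets of W of cardinality at most B, and suppose there exist pairwise disjoint sets N_s ⊆ { w ∈ W : D(o_w, o_s) ≤ α }, one for each s ∈ S_OPT, each of size at least (1/r) · ln(B/ε). Let W̃ be a random subset of W obtained by including each element of W independently with probability r. Then with probability at least 1 − ε the following holds: every subset S_G ⊆ W̃ with |S_G| ≤ B and f(S_G) ≥ (1 − 1/e) · max{ f(S) : S ⊆ W̃, |S| ≤ B } satisfies f(S_G) ≥ (1 − 1/e) · ( f(S_OPT) − λ · α · B ). -/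

import Mathlib

open Finset MeasureTheory
open scoped ENNReal

lemma aux_pow_bound (r ε : ℝ) (B n : ℕ) (hr0 : 0 < r) (hr1 : r < 1)
    (hε0 : 0 < ε) (hB : 1 ≤ B) (hn : (1/r) * Real.log ((B:ℝ)/ε) ≤ (n:ℝ)) :
    (1 - r) ^ n ≤ ε / B := by
  have hBpos : (0:ℝ) < B := by exact_mod_cast hB
  have h1 : (1 - r) ≤ Real.exp (-r) := by
    have := Real.add_one_le_exp (-r); linarith
  have h0 : (0:ℝ) ≤ 1 - r := by linarith
  have hlog : Real.log ((B:ℝ)/ε) ≤ r * n := by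
    have h := mul_le_mul_of_nonneg_left hn hr0.le
    rwa [← mul_assoc, mul_one_div, div_self hr0.ne', one_mul] at h
  calc (1 - r) ^ n ≤ (Real.exp (-r)) ^ n := pow_le_pow_left₀ h0 h1 n
    _ = Real.exp (-(r * n)) := by rw [← Real.exp_nat_mul]; ring_nf
    _ ≤ Real.exp (-(Real.log ((B:ℝ)/ε))) := Real.exp_le_exp.mpr (by linarith)
    _ = ε / B := by
        rw [Real.exp_neg, Real.exp_log (by positivity), inv_div]

lemma aux_measure_allfalse {W : Type*} [Fintype W] [DecidableEq W] (p : NNReal) (hp : p ≤ 1)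
    (T : Finset W) :
    Measure.pi (fun _ : W => (PMF.bernoulli p hp).toMeasure)
      {ω : W → Bool | ∀ w ∈ T, ω w = false} = (1 - (p : ℝ≥0∞)) ^ T.card := by
  have hset : {ω : W → Bool | ∀ w ∈ T, ω w = false}
      = Set.univ.pi (fun w => if w ∈ T then ({false} : Set Bool) else Set.univ) := by
    ext ω
    simp only [Set.mem_setOf_eq, Set.mem_pi, Set.mem_univ, forall_true_left]
    constructor
    · intro h w
      by_cases hw : w ∈ T <;> simp [hw, h w]
    · intro h w hw
      have := h w
      simpa [hw] using this
  rw [hset, Measure.pi_pi]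
  have hfactor : ∀ w : W,
      (PMF.bernoulli p hp).toMeasure (if w ∈ T then ({false} : Set Bool) else Set.univ)
        = if w ∈ T then (1 - (p : ℝ≥0∞)) else 1 := by
    intro w
    by_cases hw : w ∈ T <;> simp only [hw, if_true, if_false]
    · rw [PMF.toMeasure_apply_singleton _ _ (measurableSet_singleton _), PMF.bernoulli_apply]
      rfl
    · exact measure_univ
  simp_rw [hfactor]
  rw [Finset.prod_ite_mem, Finset.univ_inter, Finset.prod_const]

/-- Utility guarantee for random sampling followed by near-optimal selection
(`RandGreedy`): let `f` be a non-negative, monotone, submodular set function on subsets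
of a finite set `W` with smoothness parameter `λ ≥ 0` (w.r.t. the attribute map
`o : W → M` into a metric space). Let `S_OPT` maximize `f` over subsets of cardinality
at most `B`, and suppose each `s ∈ S_OPT` has a set `N s` of at least
`(1/r) · ln(B/ε)` users whose attributes are within distance `α` of `o_s`, these sets
being pairwise disjoint. If `W̃` includes each user independently with probability `r`,
then with probability at least `1 − ε`, every `(1 − 1/e)`-approximate maximizer
`S_G ⊆ W̃` with `|S_G| ≤ B` satisfies `f(S_G) ≥ (1 − 1/e) · (f(S_OPT) − λ · α · B)`. -/
theorem randgreedy_guarantee {W M : Type*} [Fintype W] [DecidableEq W] [MetricSpace M]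
    (o : W → M)
    (f : Finset W → ℝ) (hnn : ∀ S : Finset W, 0 ≤ f S)
    (hmono : ∀ S S' : Finset W, S ⊆ S' → f S ≤ f S')
    (hsub : ∀ S S' : Finset W, S ⊆ S' → ∀ v ∉ S',
      f (insert v S') - f S' ≤ f (insert v S) - f S)
    (lam : ℝ) (hlam : 0 ≤ lam)
    (hsmooth : ∀ (S : Finset W) (β : ℝ) (g : W → W), 0 ≤ β →
      (∀ s ∈ S, dist (o (g s)) (o s) ≤ β) →
      |f S - f (S.image g)| ≤ lam * β * S.card)
    (B : ℕ) (hB : 1 ≤ B) (r : ℝ) (hr0 : 0 < r) (hr1 : r < 1)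
    (ε : ℝ) (hε0 : 0 < ε) (hε1 : ε < 1) (α : ℝ) (hα : 0 ≤ α)
    (SOPT : Finset W) (hSOPTcard : SOPT.card ≤ B)
    (hSOPTopt : ∀ S : Finset W, S.card ≤ B → f S ≤ f SOPT)
    (N : W → Finset W)
    (hNnear : ∀ s ∈ SOPT, ∀ w ∈ N s, dist (o w) (o s) ≤ α)
    (hNdisj : ∀ s ∈ SOPT, ∀ s' ∈ SOPT, s ≠ s' → Disjoint (N s) (N s'))
    (hNcard : ∀ s ∈ SOPT, (1 / r) * Real.log ((B : ℝ) / ε) ≤ ((N s).card : ℝ)) :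
    ENNReal.ofReal (1 - ε) ≤
      Measure.pi
        (fun _ : W => (PMF.bernoulli (Real.toNNReal r)
          (Real.toNNReal_le_one.mpr hr1.le)).toMeasure)
        {ω : W → Bool |
          ∀ SG : Finset W,
            SG ⊆ Finset.univ.filter (fun w => ω w = true) → SG.card ≤ B →
            (1 - 1 / Real.exp 1) *
                (((Finset.univ.filter (fun w => ω w = true)).powerset.filter
                    (fun S : Finset W => S.card ≤ B)).sup' ⟨∅, by simp⟩ f)
              ≤ f SG →
            (1 - 1 / Real.exp 1) * (f SOPT - lam * α * B) ≤ f SG} := by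
  classical
  set μ := Measure.pi (fun _ : W => (PMF.bernoulli (Real.toNNReal r)
      (Real.toNNReal_le_one.mpr hr1.le)).toMeasure) with hμdef
  set E : Set (W → Bool) := {ω | ∀ s ∈ SOPT, ∃ w ∈ N s, ω w = true} with hEdef
  -- Step 1: E is contained in the target event.
  have hfac : (0:ℝ) ≤ 1 - 1 / Real.exp 1 := by
    have h1 : (1:ℝ) ≤ Real.exp 1 := Real.one_le_exp (by norm_num)
    have h2 : 1 / Real.exp 1 ≤ 1 := by
      rw [div_le_one (by positivity)]; exact h1
    linarith
  have hsubset : E ⊆ {ω : W → Bool |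
          ∀ SG : Finset W,
            SG ⊆ Finset.univ.filter (fun w => ω w = true) → SG.card ≤ B →
            (1 - 1 / Real.exp 1) *
                (((Finset.univ.filter (fun w => ω w = true)).powerset.filter
                    (fun S : Finset W => S.card ≤ B)).sup' ⟨∅, by simp⟩ f)
              ≤ f SG →
            (1 - 1 / Real.exp 1) * (f SOPT - lam * α * B) ≤ f SG} := by
    intro ω hω
    intro SG hSG hSGcard hSGapprox
    have hω' : ∀ s ∈ SOPT, ∃ w ∈ N s, ω w = true := hω
    choose! g hg1 hg2 using hω'
    have hdist : ∀ s ∈ SOPT, dist (o (g s)) (o s) ≤ α :=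
      fun s hs => hNnear s hs _ (hg1 s hs)
    have hsm := hsmooth SOPT α g hα hdist
    have h1 : f SOPT - lam * α * B ≤ f (SOPT.image g) := by
      have habs := (abs_le.mp hsm).2
      have hcb : lam * α * (SOPT.card : ℝ) ≤ lam * α * B := by
        apply mul_le_mul_of_nonneg_left _ (mul_nonneg hlam hα)
        exact_mod_cast hSOPTcard
      linarith
    have himg_mem : SOPT.image g ∈
        (Finset.univ.filter (fun w => ω w = true)).powerset.filter
          (fun S : Finset W => S.card ≤ B) := by
      rw [Finset.mem_filter, Finset.mem_powerset]
      constructor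
      · intro w hw
        obtain ⟨s, hs, rfl⟩ := Finset.mem_image.mp hw
        simp [hg2 s hs]
      · exact le_trans Finset.card_image_le hSOPTcard
    have hsup : f (SOPT.image g) ≤
        ((Finset.univ.filter (fun w => ω w = true)).powerset.filter
            (fun S : Finset W => S.card ≤ B)).sup' ⟨∅, by simp⟩ f :=
      Finset.le_sup' f himg_mem
    calc (1 - 1 / Real.exp 1) * (f SOPT - lam * α * B)
        ≤ (1 - 1 / Real.exp 1) *
            (((Finset.univ.filter (fun w => ω w = true)).powerset.filter
                (fun S : Finset W => S.card ≤ B)).sup' ⟨∅, by simp⟩ f) :=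
          mul_le_mul_of_nonneg_left (h1.trans hsup) hfac
      _ ≤ f SG := hSGapprox
  refine le_trans ?_ (measure_mono hsubset)
  -- Step 2: probability bound for E.
  have hBpos : (0:ℝ) < B := by exact_mod_cast hB
  have hEc : μ Eᶜ ≤ ENNReal.ofReal ε := by
    have hEc_sub : Eᶜ ⊆ ⋃ s ∈ SOPT, {ω : W → Bool | ∀ w ∈ N s, ω w = false} := by
      intro ω hω
      simp only [hEdef, Set.mem_compl_iff, Set.mem_setOf_eq, not_forall] at hω
      push_neg at hω
      obtain ⟨s, hs, hws⟩ := hω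
      refine Set.mem_biUnion hs ?_
      intro w hw
      have := hws w hw
      simp at this
      exact this
    calc μ Eᶜ ≤ ∑ s ∈ SOPT, μ {ω : W → Bool | ∀ w ∈ N s, ω w = false} :=
        le_trans (measure_mono hEc_sub) (measure_biUnion_finset_le _ _)
      _ ≤ ∑ _s ∈ SOPT, ENNReal.ofReal (ε / B) := by
          apply Finset.sum_le_sum
          intro s hs
          rw [hμdef, aux_measure_allfalse]
          have hsubr : (1 : ℝ≥0∞) - (Real.toNNReal r : ℝ≥0∞) = ENNReal.ofReal (1 - r) := by
            show (1 : ℝ≥0∞) - ENNReal.ofReal r = _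
            rw [ENNReal.ofReal_sub _ hr0.le, ENNReal.ofReal_one]
          rw [hsubr, ← ENNReal.ofReal_pow (by linarith)]
          exact ENNReal.ofReal_le_ofReal
            (aux_pow_bound r ε B _ hr0 hr1 hε0 hB (hNcard s hs))
      _ = (SOPT.card : ℝ≥0∞) * ENNReal.ofReal (ε / B) := by
          rw [Finset.sum_const, nsmul_eq_mul]
      _ ≤ (B : ℝ≥0∞) * ENNReal.ofReal (ε / B) := by
          have : (SOPT.card : ℝ≥0∞) ≤ (B : ℝ≥0∞) := by exact_mod_cast hSOPTcard
          exact mul_le_mul_left this _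
      _ = ENNReal.ofReal ε := by
          rw [← ENNReal.ofReal_natCast B, ← ENNReal.ofReal_mul (by positivity)]
          congr 1
          field_simp
  have hmeasEc : MeasurableSet (Eᶜ : Set (W → Bool)) := (Set.toFinite _).measurableSet
  have hprob : IsProbabilityMeasure μ := by rw [hμdef]; infer_instance
  have hEeq : μ E = 1 - μ Eᶜ := by
    have h := prob_compl_eq_one_sub (μ := μ) hmeasEc
    rwa [compl_compl] at h
  rw [hEeq]
  have : ENNReal.ofReal (1 - ε) = 1 - ENNReal.ofReal ε := by
    rw [ENNReal.ofReal_sub _ hε0.le, ENNReal.ofReal_one]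
  rw [this]
  exact tsub_le_tsub_left hEc 1
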